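/- Let K be a compact convex set, S a polysimplex, F : K → S affine, and for s ∈ S let F_s denote the constant map with value s. Define ID_s(F) = min{λ ∈ [0,1] : (1−λ)F + λF_s is entanglement breaking}. Then inf over all s ∈ S of ID_s(F) equals the inf over s in the relative interior of S: ID(F) = inf_{s ∈ ri(S)} ID_s(F). Specifically, if s_0 ∈ ∂S, s_1 ∈ ri(S) and s_t = t s_1 + (1−t) s_0, then ID_{s_t}(F) ≤ ID_{s_0}(F)/(1 − t(1 − ID_{s_0}(F))), which tends to ID_{s_0}(F) as t → 0. -/

import Mathlib

abbrev PolyAmb (k : ℕ) (l : Fin (k + 1) → ℕ) := Π i : Fin (k + 1), Fin (l i + 1) → ℝ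

def Spoly (k : ℕ) (l : Fin (k + 1) → ℕ) : Set (PolyAmb k l) :=
  Set.univ.pi fun i => stdSimplex ℝ (Fin (l i + 1))

/-- The cone `V(K)⁺ = ∪_{c ≥ 0} c•K` generated by a base `K`. -/
def coneOf {E : Type*} [AddCommGroup E] [Module ℝ E] (K : Set E) : Set E :=
  {v | ∃ c : ℝ, 0 ≤ c ∧ ∃ x ∈ K, v = c • x}

def IsAffineOn {E V : Type*} [AddCommGroup E] [Module ℝ E] [AddCommGroup V] [Module ℝ V]
    (C : Set E) (f : E → V) : Prop :=
  ∀ x ∈ C, ∀ y ∈ C, ∀ a b : ℝ, 0 ≤ a → 0 ≤ b → a + b = 1 →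
    f (a • x + b • y) = a • f x + b • f y

/-- `T` is entanglement breaking on `C` (with target cone `P`): it is a finite sum
`T = Σ_j f_j(·) φ_j` with `f_j` nonnegative affine functions on `C` and `φ_j ∈ P`. -/
def ETBOn {E V : Type*} [AddCommGroup E] [Module ℝ E] [AddCommGroup V] [Module ℝ V]
    (C : Set E) (P : Set V) (T : E → V) : Prop :=
  ∃ (n : ℕ) (f : Fin n → E → ℝ) (φ : Fin n → V),
    (∀ j, IsAffineOn C (f j)) ∧ (∀ j, ∀ x ∈ C, 0 ≤ f j x) ∧ (∀ j, φ j ∈ P) ∧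
    ∀ x ∈ C, T x = ∑ j, f j x • φ j

/-- The incompatibility degree `ID_s(F)`: the least `λ ∈ [0,1]` such that
`(1−λ)F + λF_s` is entanglement breaking. -/
noncomputable def IDs {E : Type*} [AddCommGroup E] [Module ℝ E]
    (k : ℕ) (l : Fin (k + 1) → ℕ) (K : Set E) (F : E → PolyAmb k l)
    (s : PolyAmb k l) : ℝ :=
  sInf {lam : ℝ | lam ∈ Set.Icc (0 : ℝ) 1 ∧
    ETBOn K (coneOf (Spoly k l)) (fun x => (1 - lam) • F x + lam • s)}

section Feas
variable {E : Type*} [AddCommGroup E] [Module ℝ E]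
  (k : ℕ) (l : Fin (k + 1) → ℕ) (K : Set E) (F : E → PolyAmb k l)

/-- The feasible set defining `IDs`. -/
def Feas (s : PolyAmb k l) : Set ℝ :=
  {lam : ℝ | lam ∈ Set.Icc (0 : ℝ) 1 ∧
    ETBOn K (coneOf (Spoly k l)) (fun x => (1 - lam) • F x + lam • s)}

lemma IDs_eq_sInf_Feas (s : PolyAmb k l) : IDs k l K F s = sInf (Feas k l K F s) := rfl

lemma one_mem_Feas {s : PolyAmb k l} (hs : s ∈ Spoly k l) : (1 : ℝ) ∈ Feas k l K F s := by
  refine ⟨⟨zero_le_one, le_refl 1⟩, 1, (fun _ _ => 1), (fun _ => s), ?_, ?_, ?_, ?_⟩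
  · intro j x hx y hy a b ha hb hab
    simp only [smul_eq_mul, mul_one]; linarith
  · intro j x hx; norm_num
  · intro j; exact ⟨1, zero_le_one, s, hs, (one_smul _ _).symm⟩
  · intro x hx; simp

lemma Feas_bddBelow (s : PolyAmb k l) : BddBelow (Feas k l K F s) :=
  ⟨0, fun x hx => hx.1.1⟩

lemma IDs_nonneg (s : PolyAmb k l) : 0 ≤ IDs k l K F s :=
  Real.sInf_nonneg fun x hx => hx.1.1

lemma IDs_le_of_mem_Feas {s : PolyAmb k l} {lam : ℝ} (h : lam ∈ Feas k l K F s) :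
    IDs k l K F s ≤ lam :=
  csInf_le (Feas_bddBelow k l K F s) h

lemma IDs_le_one {s : PolyAmb k l} (hs : s ∈ Spoly k l) : IDs k l K F s ≤ 1 :=
  IDs_le_of_mem_Feas k l K F (one_mem_Feas k l K F hs)

/-- Feasibility transfer: if `lam` is feasible for `s0` and `s1 = δ s0 + (1-δ) s'`, then
`lam / (lam + β (1-lam))` with `β = 1 - t(1-δ)` is feasible for `t s1 + (1-t) s0`. -/
lemma Feas_transfer {s0 s' : PolyAmb k l} (hs' : s' ∈ Spoly k l) {t δ lam : ℝ}
    (ht0 : 0 ≤ t) (hδ1 : δ ≤ 1) (hβ : 0 < 1 - t * (1 - δ)) (hlam : lam ∈ Feas k l K F s0) :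
    lam / (lam + (1 - t * (1 - δ)) * (1 - lam)) ∈
      Feas k l K F (t • (δ • s0 + (1 - δ) • s') + (1 - t) • s0) := by
  obtain ⟨⟨hlam0, hlam1⟩, n, f, φ, haff, hpos, hP, hsum⟩ := hlam
  set β : ℝ := 1 - t * (1 - δ) with hβdef
  have hβ1 : β ≤ 1 := by nlinarith
  have hD : 0 < lam + β * (1 - lam) := by nlinarith
  set μ : ℝ := lam / (lam + β * (1 - lam)) with hμdef
  set c : ℝ := β / (lam + β * (1 - lam)) with hcdef
  set d : ℝ := lam * (1 - β) / (lam + β * (1 - lam)) with hddef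
  have hc0 : 0 ≤ c := div_nonneg hβ.le hD.le
  have hd0 : 0 ≤ d := div_nonneg (mul_nonneg hlam0 (by linarith)) hD.le
  refine ⟨⟨div_nonneg hlam0 hD.le, (div_le_one hD).mpr (by nlinarith)⟩,
    n + 1, Fin.snoc (fun j x => c * f j x) (fun _ => d), Fin.snoc φ s', ?_, ?_, ?_, ?_⟩
  · intro j
    refine Fin.lastCases ?_ (fun j => ?_) j
    · intro x hx y hy a b ha hb hab
      simp only [Fin.snoc_last, smul_eq_mul]
      nlinarith
    · intro x hx y hy a b ha hb hab
      simp only [Fin.snoc_castSucc]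
      rw [haff j x hx y hy a b ha hb hab]
      simp only [smul_eq_mul]; ring
  · intro j
    refine Fin.lastCases ?_ (fun j => ?_) j
    · intro x hx; simp only [Fin.snoc_last]; exact hd0
    · intro x hx; simp only [Fin.snoc_castSucc]; exact mul_nonneg hc0 (hpos j x hx)
  · intro j
    refine Fin.lastCases ?_ (fun j => ?_) j
    · simp only [Fin.snoc_last]; exact ⟨1, zero_le_one, s', hs', (one_smul _ _).symm⟩
    · simp only [Fin.snoc_castSucc]; exact hP j
  · intro x hx
    rw [Fin.sum_univ_castSucc]
    simp only [Fin.snoc_castSucc, Fin.snoc_last]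
    have hsx : (1 - lam) • F x + lam • s0 = ∑ j : Fin n, f j x • φ j := hsum x hx
    have hkey : ∑ j : Fin n, (c * f j x) • φ j
        = c • ((1 - lam) • F x + lam • s0) := by
      rw [hsx, Finset.smul_sum]
      exact Finset.sum_congr rfl fun j _ => by rw [smul_smul]
    rw [hkey]
    have h1 : 1 - μ = c * (1 - lam) := by
      rw [hμdef, hcdef]; field_simp; try ring
    have h2 : μ * (t * δ) + μ * (1 - t) = c * lam := by
      rw [hμdef, hcdef]; field_simp; try ring
    have h3 : μ * (t * (1 - δ)) = d := by
      rw [hμdef, hddef, hβdef]; field_simp; try ring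
    match_scalars
    all_goals first
      | linear_combination h1
      | linear_combination h2
      | linear_combination h3
end Feas

section Geo
variable {V : Type*} [AddCommGroup V] [Module ℝ V] [TopologicalSpace V]
  [IsTopologicalAddGroup V] [ContinuousSMul ℝ V]

/-- From an intrinsic-interior point one can move slightly past it away from any point of `s`. -/
lemma extend_beyond {s : Set V} {x y : V} (hx : x ∈ intrinsicInterior ℝ s) (hy : y ∈ s) :
    ∃ ε : ℝ, 0 < ε ∧ (1 + ε) • x - ε • y ∈ s := by
  rw [mem_intrinsicInterior] at hx
  obtain ⟨x', hx', rfl⟩ := hx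
  have hyA : y ∈ affineSpan ℝ s := subset_affineSpan ℝ s hy
  have hmem : ∀ ε : ℝ, ε • ((x' : V) - y) + (x' : V) ∈ affineSpan ℝ s := by
    intro ε
    have := (affineSpan ℝ s).smul_vsub_vadd_mem ε x'.2 hyA x'.2
    simpa [vsub_eq_sub, vadd_eq_add] using this
  set f : ℝ → affineSpan ℝ s := fun ε => ⟨ε • ((x' : V) - y) + (x' : V), hmem ε⟩ with hf
  have hfc : Continuous f :=
    Continuous.subtype_mk ((continuous_id.smul continuous_const).add continuous_const) _
  have hO : IsOpen (f ⁻¹' interior ((↑) ⁻¹' s : Set (affineSpan ℝ s))) :=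
    isOpen_interior.preimage hfc
  have h0 : (0 : ℝ) ∈ f ⁻¹' interior ((↑) ⁻¹' s : Set (affineSpan ℝ s)) := by
    have : f 0 = x' := by ext; simp [hf]
    simpa [this] using hx'
  rcases Metric.isOpen_iff.mp hO 0 h0 with ⟨r, hr, hball⟩
  refine ⟨r / 2, by positivity, ?_⟩
  have hmem2 : f (r / 2) ∈ interior ((↑) ⁻¹' s : Set (affineSpan ℝ s)) := by
    apply hball
    rw [Metric.mem_ball, Real.dist_eq, sub_zero, abs_of_pos (by positivity : (0:ℝ) < r / 2)]
    linarith
  have hpre : f (r / 2) ∈ ((↑) ⁻¹' s : Set (affineSpan ℝ s)) := interior_subset hmem2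
  have : ((f (r / 2) : V)) ∈ s := hpre
  have heq : ((f (r / 2) : V)) = (1 + r / 2) • (x' : V) - (r / 2) • y := by
    simp only [hf]; module
  rwa [heq] at this

/-- Convex combinations of an intrinsic-interior point and a point of `s` are intrinsic
interior. -/
lemma combo_mem_intrinsicInterior {s : Set V} (hs : Convex ℝ s) {x y : V}
    (hx : x ∈ intrinsicInterior ℝ s) (hy : y ∈ s) {t : ℝ} (ht : 0 < t) (ht1 : t ≤ 1) :
    t • x + (1 - t) • y ∈ intrinsicInterior ℝ s := by
  rw [mem_intrinsicInterior] at hx ⊢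
  obtain ⟨x', hx', rfl⟩ := hx
  have hyA : y ∈ affineSpan ℝ s := subset_affineSpan ℝ s hy
  have hmem : ∀ z : affineSpan ℝ s, ∀ c : ℝ, c • ((z : V) - y) + y ∈ affineSpan ℝ s := by
    intro z c
    have := (affineSpan ℝ s).smul_vsub_vadd_mem c z.2 hyA hyA
    simpa [vsub_eq_sub, vadd_eq_add] using this
  have hwmem : t • ((x' : V) - y) + y ∈ affineSpan ℝ s := hmem x' t
  set w : affineSpan ℝ s := ⟨t • ((x' : V) - y) + y, hwmem⟩ with hwdef
  set h : affineSpan ℝ s → affineSpan ℝ s := fun z => ⟨t⁻¹ • ((z : V) - y) + y, hmem z t⁻¹⟩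
    with hhdef
  have hhc : Continuous h :=
    Continuous.subtype_mk (((continuous_subtype_val.sub continuous_const).const_smul
      _).add continuous_const) _
  have hhw : h w = x' := by
    ext
    simp only [hhdef, hwdef]
    match_scalars <;> field_simp <;> ring
  set O : Set (affineSpan ℝ s) := h ⁻¹' interior ((↑) ⁻¹' s : Set (affineSpan ℝ s)) with hOdef
  have hOopen : IsOpen O := isOpen_interior.preimage hhc
  have hwO : w ∈ O := by simp only [hOdef, Set.mem_preimage, hhw]; exact hx'
  have hOsub : O ⊆ ((↑) ⁻¹' s : Set (affineSpan ℝ s)) := by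
    intro z hz
    have hzpre : h z ∈ ((↑) ⁻¹' s : Set (affineSpan ℝ s)) := interior_subset hz
    have hz' : ((h z : V)) ∈ s := hzpre
    have hcomb : t • ((h z : V)) + (1 - t) • y ∈ s := hs hz' hy ht.le (by linarith) (by ring)
    have : t • ((h z : V)) + (1 - t) • y = (z : V) := by
      simp only [hhdef]; match_scalars <;> field_simp <;> ring
    rwa [this] at hcomb
  refine ⟨w, interior_maximal hOsub hOopen hwO, ?_⟩
  simp only [hwdef]
  module
end Geo


/-- Core quantitative bound, with the interior point given in decomposed form
`s1 = δ • s0 + (1-δ) • s'`. -/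
lemma IDs_combo_le {E : Type*} [AddCommGroup E] [Module ℝ E]
    (k : ℕ) (l : Fin (k + 1) → ℕ) (K : Set E) (F : E → PolyAmb k l)
    {s0 s' : PolyAmb k l} (hs0 : s0 ∈ Spoly k l) (hs' : s' ∈ Spoly k l)
    {δ t : ℝ} (hδ0 : 0 < δ) (hδ1 : δ ≤ 1) (ht : 0 < t) (ht1 : t ≤ 1) :
    IDs k l K F (t • (δ • s0 + (1 - δ) • s') + (1 - t) • s0) ≤
      IDs k l K F s0 / (1 - t * (1 - IDs k l K F s0)) := by
  set lam0 : ℝ := IDs k l K F s0 with hlam0def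
  have hlam00 : 0 ≤ lam0 := IDs_nonneg k l K F s0
  have hlam01 : lam0 ≤ 1 := IDs_le_one k l K F hs0
  have hβ : 0 < 1 - t * (1 - δ) := by nlinarith [mul_pos ht hδ0]
  set β : ℝ := 1 - t * (1 - δ) with hβdef
  have hβ1 : β ≤ 1 := by nlinarith
  have hD0 : 0 < lam0 + β * (1 - lam0) := by nlinarith
  have stepB : IDs k l K F (t • (δ • s0 + (1 - δ) • s') + (1 - t) • s0) ≤
      lam0 / (lam0 + β * (1 - lam0)) := by
    apply le_of_forall_pos_le_add
    intro ε hε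
    obtain ⟨lam, hlamF, hlamlt⟩ :=
      Real.lt_sInf_add_pos ⟨1, one_mem_Feas k l K F hs0⟩ (mul_pos hβ hε)
    rw [← IDs_eq_sInf_Feas, ← hlam0def] at hlamlt
    have hlam0 : 0 ≤ lam := hlamF.1.1
    have hlam1 : lam ≤ 1 := hlamF.1.2
    have hge : lam0 ≤ lam := csInf_le (Feas_bddBelow k l K F s0) hlamF
    have hDl : 0 < lam + β * (1 - lam) := by nlinarith
    have h := IDs_le_of_mem_Feas k l K F (Feas_transfer k l K F hs' ht.le hδ1 hβ hlamF)
    have hmono : lam / (lam + β * (1 - lam)) ≤ lam0 / (lam0 + β * (1 - lam0)) + ε := by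
      rw [div_add' _ _ _ hD0.ne', div_le_div_iff₀ hDl hD0]
      have hD0β : β ≤ lam0 + β * (1 - lam0) := by nlinarith
      have hDlβ : β ≤ lam + β * (1 - lam) := by nlinarith
      have h2 : β * β ≤ (lam0 + β * (1 - lam0)) * (lam + β * (1 - lam)) :=
        mul_le_mul hD0β hDlβ hβ.le (by positivity)
      nlinarith [mul_lt_mul_of_pos_left hlamlt hβ, mul_le_mul_of_nonneg_left h2 hε.le]
    exact h.trans hmono
  refine stepB.trans ?_
  have hD0' : 0 ≤ 1 - t * (1 - lam0) := by nlinarith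
  rcases eq_or_lt_of_le hD0' with h0 | h0
  · have hlam0z : lam0 = 0 := by nlinarith
    rw [hlam0z]
    simp
  · have hle : 1 - t * (1 - lam0) ≤ lam0 + β * (1 - lam0) := by nlinarith [mul_pos ht hδ0]
    gcongr


/-- `ID(F) = inf_{s ∈ ri S} ID_s(F)`; specifically, for `s_0 ∈ S`,
`s_1 ∈ ri S` and `s_t = t s_1 + (1−t) s_0` with `0 < t ≤ 1`,
`ID_{s_t}(F) ≤ ID_{s_0}(F) / (1 − t(1 − ID_{s_0}(F)))`. -/
theorem stmt_11 {E : Type*} [AddCommGroup E] [Module ℝ E]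
    (k : ℕ) (l : Fin (k + 1) → ℕ) (K : Set E) (hK : Convex ℝ K)
    (F : E → PolyAmb k l) (hF : IsAffineOn K F)
    (hFS : ∀ x ∈ K, F x ∈ Spoly k l) :
    sInf ((fun s => IDs k l K F s) '' Spoly k l) =
      sInf ((fun s => IDs k l K F s) '' intrinsicInterior ℝ (Spoly k l)) ∧
    ∀ s0 ∈ Spoly k l, ∀ s1 ∈ intrinsicInterior ℝ (Spoly k l), ∀ t : ℝ, 0 < t → t ≤ 1 →
      IDs k l K F (t • s1 + (1 - t) • s0) ≤
        IDs k l K F s0 / (1 - t * (1 - IDs k l K F s0)) := by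
  have hconv : Convex ℝ (Spoly k l) := convex_pi fun i _ => convex_stdSimplex ℝ _
  have hne : (Spoly k l).Nonempty := by
    refine ⟨fun i j => if j = 0 then 1 else 0, fun i _ => ?_⟩
    exact ⟨fun j => by dsimp; split <;> norm_num, by simp⟩
  have key : ∀ s0 ∈ Spoly k l, ∀ s1 ∈ intrinsicInterior ℝ (Spoly k l), ∀ t : ℝ,
      0 < t → t ≤ 1 → IDs k l K F (t • s1 + (1 - t) • s0) ≤
        IDs k l K F s0 / (1 - t * (1 - IDs k l K F s0)) := by
    intro s0 hs0 s1 hs1 t ht ht1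
    obtain ⟨ε, hε, hz⟩ := extend_beyond hs1 hs0
    have h1ε : (0 : ℝ) < 1 + ε := by linarith
    have hδ0 : 0 < ε / (1 + ε) := div_pos hε h1ε
    have hδ1 : ε / (1 + ε) ≤ 1 := by rw [div_le_one h1ε]; linarith
    have hrepr : (ε / (1 + ε)) • s0 + (1 - ε / (1 + ε)) • ((1 + ε) • s1 - ε • s0) = s1 := by
      match_scalars <;> field_simp <;> ring
    rw [← hrepr]
    exact IDs_combo_le k l K F hs0 hz hδ0 hδ1 ht ht1
  obtain ⟨sI, hsI⟩ := hne.intrinsicInterior hconv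
  have bddA : BddBelow ((fun s => IDs k l K F s) '' Spoly k l) := by
    refine ⟨0, ?_⟩
    rintro a ⟨s, hs, rfl⟩
    exact IDs_nonneg k l K F s
  have bddB : BddBelow ((fun s => IDs k l K F s) '' intrinsicInterior ℝ (Spoly k l)) := by
    refine ⟨0, ?_⟩
    rintro a ⟨s, hs, rfl⟩
    exact IDs_nonneg k l K F s
  have hBne : ((fun s => IDs k l K F s) '' intrinsicInterior ℝ (Spoly k l)).Nonempty :=
    ⟨IDs k l K F sI, sI, hsI, rfl⟩
  constructor
  · refine le_antisymm (csInf_le_csInf bddA hBne (Set.image_mono intrinsicInterior_subset)) ?_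
    apply le_of_forall_pos_le_add
    intro ε hε
    have hAne : ((fun s => IDs k l K F s) '' Spoly k l).Nonempty :=
      ⟨IDs k l K F sI, sI, intrinsicInterior_subset hsI, rfl⟩
    obtain ⟨a, haA, halt⟩ := Real.lt_sInf_add_pos hAne (half_pos hε)
    obtain ⟨s0, hs0, rfl⟩ := haA
    set t : ℝ := min (1/2) (ε/4) with htdef
    have ht0 : 0 < t := lt_min (by norm_num) (by positivity)
    have ht1 : t ≤ 1 := le_trans (min_le_left _ _) (by norm_num)
    have hthalf : t ≤ 1/2 := min_le_left _ _
    have htε : t ≤ ε/4 := min_le_right _ _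
    have humem : t • sI + (1 - t) • s0 ∈ intrinsicInterior ℝ (Spoly k l) :=
      combo_mem_intrinsicInterior hconv hsI hs0 ht0 ht1
    have hb := key s0 hs0 sI hsI t ht0 ht1
    set lam0 : ℝ := IDs k l K F s0 with hlam0def
    have hlam00 : 0 ≤ lam0 := IDs_nonneg k l K F s0
    have hlam01 : lam0 ≤ 1 := IDs_le_one k l K F hs0
    have hDpos : 0 < 1 - t * (1 - lam0) := by nlinarith
    have hquant : lam0 / (1 - t * (1 - lam0)) ≤ lam0 + ε/2 := by
      rw [div_le_iff₀ hDpos]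
      nlinarith [mul_nonneg ht0.le hlam00, mul_nonneg hlam00 (sub_nonneg.mpr hlam01),
        mul_nonneg ht0.le (mul_nonneg hlam00 (sub_nonneg.mpr hlam01))]
    have hsB : sInf ((fun s => IDs k l K F s) '' intrinsicInterior ℝ (Spoly k l)) ≤
        IDs k l K F (t • sI + (1 - t) • s0) :=
      csInf_le bddB ⟨t • sI + (1 - t) • s0, humem, rfl⟩
    calc sInf ((fun s => IDs k l K F s) '' intrinsicInterior ℝ (Spoly k l))
        ≤ IDs k l K F (t • sI + (1 - t) • s0) := hsB
      _ ≤ lam0 / (1 - t * (1 - lam0)) := hb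
      _ ≤ lam0 + ε/2 := hquant
      _ ≤ sInf ((fun s => IDs k l K F s) '' Spoly k l) + ε := by linarith
  · exact key
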